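/- For n = 2^j ≥ 4, the descent set statistic satisfies β_n(S) ≡ (-1)^{|S \ {n/2}|} (mod 4) for every S ⊆ [n-1]. Consequently exactly half of the subsets S ⊆ [n-1] have β_n(S) ≡ 1 (mod 4) and the other half have β_n(S) ≡ 3 (mod 4). -/

import Mathlib

open Finset

def descSet (n : ℕ) (π : Equiv.Perm (Fin n)) : Finset ℕ :=
  (Finset.Icc 1 (n - 1)).filter (fun i =>
    ∃ h : i < n, π ⟨i, h⟩ < π ⟨i - 1, by omega⟩)

def descBeta (n : ℕ) (S : Finset ℕ) : ℕ :=
  (Finset.univ.filter (fun π : Equiv.Perm (Fin n) => descSet n π = S)).card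

def descAlpha (n : ℕ) (S : Finset ℕ) : ℕ :=
  (Finset.univ.filter (fun π : Equiv.Perm (Fin n) => descSet n π ⊆ S)).card

namespace Stmt10

variable {n t : ℕ}

lemma mem_descSet_iff (π : Equiv.Perm (Fin n)) (i : ℕ) :
    i ∈ descSet n π ↔ (1 ≤ i ∧ i ≤ n - 1) ∧
      ∃ h : i < n, π ⟨i, h⟩ < π ⟨i - 1, by omega⟩ := by
  simp [descSet, Finset.mem_filter, Finset.mem_Icc]

lemma lt_of_not_descSet {π : Equiv.Perm (Fin n)} {S : Finset ℕ}
    (hπ : descSet n π ⊆ S) {i : ℕ} (h1 : 1 ≤ i) (h2 : i < n) (hi : i ∉ S) :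
    π ⟨i - 1, by omega⟩ < π ⟨i, h2⟩ := by
  have hm : i ∉ descSet n π := fun hmem => hi (hπ hmem)
  rw [mem_descSet_iff] at hm
  push_neg at hm
  rcases lt_or_eq_of_le (hm ⟨h1, by omega⟩ h2) with h | h
  · exact h
  · exfalso
    have := π.injective h
    rw [Fin.mk.injEq] at this
    omega

lemma descSet_subset_of {π : Equiv.Perm (Fin n)} {S : Finset ℕ}
    (h : ∀ i, 1 ≤ i → ∀ hn : i < n, i ∉ S → π ⟨i - 1, by omega⟩ < π ⟨i, hn⟩) :
    descSet n π ⊆ S := by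
  intro i hi
  by_contra hiS
  rw [mem_descSet_iff] at hi
  obtain ⟨⟨hi1, _⟩, hn, hlt⟩ := hi
  exact lt_asymm hlt (h i hi1 hn hiS)

lemma eq_one_of_adj (π : Equiv.Perm (Fin n))
    (h : ∀ i, 1 ≤ i → ∀ hn : i < n, π ⟨i - 1, by omega⟩ < π ⟨i, hn⟩) : π = 1 := by
  have hsm : StrictMono π := by
    cases n with
    | zero => exact fun a => a.elim0
    | succ m =>
      rw [Fin.strictMono_iff_lt_succ]
      intro i
      have := h ((i : ℕ) + 1) (by omega) (by omega)
      convert this using 2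
      · rfl
      · simp [Fin.ext_iff]
      · simp [Fin.ext_iff]
  have hr : (π : Fin n → Fin n) = (id : Fin n → Fin n) := by
    haveI : WellFoundedLT (Fin n) := inferInstance
    have hre : Set.range (π : Fin n → Fin n) = Set.range (id : Fin n → Fin n) := by
      rw [Set.range_id, Set.range_eq_univ]
      exact π.surjective
    exact (StrictMono.range_inj (β := Fin n) (γ := Fin n) hsm (strictMono_id (α := Fin n))).mp hre
  exact Equiv.ext fun x => by simpa using congrFun hr x

def posSet (n t : ℕ) : Finset (Fin n) := Finset.univ.filter (fun i => (i : ℕ) < t)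

lemma card_posSet (h : t ≤ n) : (posSet n t).card = t := by
  have he : posSet n t = (Finset.range t).attachFin
      (fun m hm => lt_of_lt_of_le (Finset.mem_range.mp hm) h) := by
    ext i
    simp [posSet, Finset.mem_attachFin]
  rw [he, Finset.card_attachFin, Finset.card_range]

def phi (n t : ℕ) (π : Equiv.Perm (Fin n)) : Finset (Fin n) := (posSet n t).image π

lemma card_phi (h : t ≤ n) (π : Equiv.Perm (Fin n)) : (phi n t π).card = t := by
  rw [phi, Finset.card_image_of_injective _ π.injective, card_posSet h]

lemma mem_phi_of_pos {π : Equiv.Perm (Fin n)} {p : Fin n} (hp : (p : ℕ) < t) :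
    π p ∈ phi n t π :=
  Finset.mem_image_of_mem _ (by simp [posSet, hp])

lemma not_mem_phi_of_pos {π : Equiv.Perm (Fin n)} {p : Fin n} (hp : ¬ (p : ℕ) < t) :
    π p ∉ phi n t π := by
  intro hmem
  rw [phi, Finset.mem_image] at hmem
  obtain ⟨q, hq, hq2⟩ := hmem
  rw [π.injective hq2] at hq
  simp [posSet] at hq
  exact hp hq

lemma exists_transport (A B : Finset (Fin n)) (h : A.card = B.card) :
    ∃ ρ : Equiv.Perm (Fin n), (∀ x, ρ x ∈ B ↔ x ∈ A) ∧
      (∀ x y, x ∈ A → y ∈ A → (ρ x < ρ y ↔ x < y)) ∧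
      (∀ x y, x ∉ A → y ∉ A → (ρ x < ρ y ↔ x < y)) := by
  classical
  have hc : Aᶜ.card = Bᶜ.card := by
    rw [Finset.card_compl, Finset.card_compl, h]
  set eA := A.orderIsoOfFin rfl with heA
  set eB := B.orderIsoOfFin h.symm with heB
  set eA' := Aᶜ.orderIsoOfFin rfl with heA'
  set eB' := Bᶜ.orderIsoOfFin hc.symm with heB'
  set f : Fin n → Fin n := fun x =>
    if hx : x ∈ A then (eB (eA.symm ⟨x, hx⟩) : Fin n)
    else (eB' (eA'.symm ⟨x, Finset.mem_compl.mpr hx⟩) : Fin n) with hf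
  have hfB : ∀ x, f x ∈ B ↔ x ∈ A := by
    intro x
    by_cases hx : x ∈ A
    · rw [hf]; simp only [dif_pos hx]
      exact iff_of_true (Finset.coe_mem _) hx
    · rw [hf]; simp only [dif_neg hx]
      refine iff_of_false ?_ hx
      have hBc := Finset.coe_mem (eB' (eA'.symm ⟨x, Finset.mem_compl.mpr hx⟩))
      exact Finset.mem_compl.mp hBc
  have hin : ∀ x y, x ∈ A → y ∈ A → (f x < f y ↔ x < y) := by
    intro x y hx hy
    rw [hf]; simp only [dif_pos hx, dif_pos hy]
    rw [Subtype.coe_lt_coe, OrderIso.lt_iff_lt, OrderIso.lt_iff_lt]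
    exact Subtype.mk_lt_mk
  have hout : ∀ x y, x ∉ A → y ∉ A → (f x < f y ↔ x < y) := by
    intro x y hx hy
    rw [hf]; simp only [dif_neg hx, dif_neg hy]
    rw [Subtype.coe_lt_coe, OrderIso.lt_iff_lt, OrderIso.lt_iff_lt]
    exact Subtype.mk_lt_mk
  have hinj : Function.Injective f := by
    intro x y hxy
    by_cases hx : x ∈ A <;> by_cases hy : y ∈ A
    · rcases lt_trichotomy x y with hl | hl | hl
      · exact absurd hxy (ne_of_lt ((hin x y hx hy).mpr hl))
      · exact hl
      · exact absurd hxy.symm (ne_of_lt ((hin y x hy hx).mpr hl))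
    · exact absurd ((hfB y).mp (hxy ▸ (hfB x).mpr hx)) hy
    · exact absurd ((hfB x).mp (hxy.symm ▸ (hfB y).mpr hy)) hx
    · rcases lt_trichotomy x y with hl | hl | hl
      · exact absurd hxy (ne_of_lt ((hout x y hx hy).mpr hl))
      · exact hl
      · exact absurd hxy.symm (ne_of_lt ((hout y x hy hx).mpr hl))
  refine ⟨Equiv.ofBijective f (Finite.injective_iff_bijective.mp hinj), ?_, ?_, ?_⟩
  · exact hfB
  · exact hin
  · exact hout

def fib (n t : ℕ) (T : Finset ℕ) (A : Finset (Fin n)) : Finset (Equiv.Perm (Fin n)) :=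
  Finset.univ.filter (fun π => descSet n π ⊆ T ∧ phi n t π = A)

lemma mem_fib_map {T : Finset ℕ} (ht : t ∈ T) {A B : Finset (Fin n)}
    (hcard : A.card = B.card)
    (ρ : Equiv.Perm (Fin n)) (hB : ∀ x, ρ x ∈ B ↔ x ∈ A)
    (hin : ∀ x y, x ∈ A → y ∈ A → (ρ x < ρ y ↔ x < y))
    (hout : ∀ x y, x ∉ A → y ∉ A → (ρ x < ρ y ↔ x < y))
    {π : Equiv.Perm (Fin n)} (hπ : π ∈ fib n t T A) : (ρ * π) ∈ fib n t T B := by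
  rw [fib, Finset.mem_filter] at hπ ⊢
  obtain ⟨-, hdesc, hphi⟩ := hπ
  have hmemA : ∀ p : Fin n, (p : ℕ) < t → π p ∈ A := fun p hp => hphi ▸ mem_phi_of_pos hp
  have hmemA' : ∀ p : Fin n, ¬ (p : ℕ) < t → π p ∉ A := fun p hp => hphi ▸ not_mem_phi_of_pos hp
  refine ⟨Finset.mem_univ _, ?_, ?_⟩
  · refine descSet_subset_of (fun i h1 hn hiT => ?_)
    have hlt : π ⟨i - 1, by omega⟩ < π ⟨i, hn⟩ := lt_of_not_descSet hdesc h1 hn hiT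
    have hne : i ≠ t := fun he => hiT (he ▸ ht)
    show ρ (π ⟨i - 1, by omega⟩) < ρ (π ⟨i, hn⟩)
    rcases lt_or_gt_of_ne hne with hc | hc
    · exact (hin _ _ (hmemA _ (by simp; omega)) (hmemA _ (by simp; omega))).mpr hlt
    · exact (hout _ _ (hmemA' _ (by simp; omega)) (hmemA' _ (by simp; omega))).mpr hlt
  · have himg : phi n t (ρ * π) = A.image ρ := by
      rw [phi, ← hphi, phi, Finset.image_image]
      rfl
    rw [himg]
    apply Finset.eq_of_subset_of_card_le
    · intro y hy
      rw [Finset.mem_image] at hy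
      obtain ⟨x, hx, rfl⟩ := hy
      exact (hB x).mpr hx
    · rw [Finset.card_image_of_injective _ ρ.injective, hcard]

lemma fib_card_eq {T : Finset ℕ} (ht : t ∈ T) {A B : Finset (Fin n)}
    (hcard : A.card = B.card) : (fib n t T A).card = (fib n t T B).card := by
  obtain ⟨ρ, hB, hin, hout⟩ := exists_transport A B hcard
  have hB' : ∀ x, ρ⁻¹ x ∈ A ↔ x ∈ B := by
    intro x
    rw [← hB (ρ⁻¹ x), Equiv.Perm.coe_inv, Equiv.apply_symm_apply]
  have hin' : ∀ x y, x ∈ B → y ∈ B → (ρ⁻¹ x < ρ⁻¹ y ↔ x < y) := by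
    intro x y hx hy
    rw [← hin _ _ ((hB' x).mpr hx) ((hB' y).mpr hy),
      Equiv.Perm.coe_inv, Equiv.apply_symm_apply, Equiv.apply_symm_apply]
  have hout' : ∀ x y, x ∉ B → y ∉ B → (ρ⁻¹ x < ρ⁻¹ y ↔ x < y) := by
    intro x y hx hy
    rw [← hout _ _ (fun hc => hx ((hB' x).mp hc)) (fun hc => hy ((hB' y).mp hc)),
      Equiv.Perm.coe_inv, Equiv.apply_symm_apply, Equiv.apply_symm_apply]
  refine Finset.card_bij' (fun π _ => ρ * π) (fun π _ => ρ⁻¹ * π) ?_ ?_ ?_ ?_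
  · intro π hπ
    exact mem_fib_map ht hcard ρ hB hin hout hπ
  · intro π hπ
    exact mem_fib_map ht hcard.symm ρ⁻¹ hB' hin' hout' hπ
  · intro π _
    group
  · intro π _
    group

lemma alpha_eq_sum (T : Finset ℕ) (htn : t ≤ n) :
    descAlpha n T = ∑ A ∈ Finset.powersetCard t (Finset.univ : Finset (Fin n)),
      (fib n t T A).card := by
  rw [descAlpha]
  rw [Finset.card_eq_sum_card_fiberwise (f := phi n t)
    (t := Finset.powersetCard t (Finset.univ : Finset (Fin n)))
    (fun π _ => Finset.mem_powersetCard.mpr ⟨Finset.subset_univ _, card_phi htn π⟩)]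
  refine Finset.sum_congr rfl (fun A _ => ?_)
  congr 1
  rw [fib, Finset.filter_filter]

lemma alpha_eq_mul {T : Finset ℕ} (ht : t ∈ T) (htn : t ≤ n) :
    descAlpha n T = n.choose t * (fib n t T (posSet n t)).card := by
  rw [alpha_eq_sum T htn]
  have hconst : ∀ A ∈ Finset.powersetCard t (Finset.univ : Finset (Fin n)),
      (fib n t T A).card = (fib n t T (posSet n t)).card := by
    intro A hA
    refine fib_card_eq ht ?_
    rw [(Finset.mem_powersetCard.mp hA).2, card_posSet htn]
  rw [Finset.sum_congr rfl hconst, Finset.sum_const, Finset.card_powersetCard,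
    Finset.card_univ, Fintype.card_fin, smul_eq_mul]

lemma choose_dvd_alpha {T : Finset ℕ} (ht : t ∈ T) (htn : t ≤ n) :
    n.choose t ∣ descAlpha n T :=
  ⟨_, alpha_eq_mul ht htn⟩

lemma descSet_one : descSet n 1 = ∅ := by
  ext i
  simp only [mem_descSet_iff, Finset.notMem_empty, iff_false, not_and]
  rintro ⟨h1, h2⟩ ⟨hn, hlt⟩
  rw [Equiv.Perm.one_apply, Equiv.Perm.one_apply, Fin.lt_iff_val_lt_val] at hlt
  simp at hlt
  omega

lemma phi_one : phi n t 1 = posSet n t := by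
  rw [phi]
  simp

lemma alpha_empty : descAlpha n (∅ : Finset ℕ) = 1 := by
  rw [descAlpha]
  have he : (Finset.univ.filter (fun π : Equiv.Perm (Fin n) => descSet n π ⊆ ∅))
      = {1} := by
    ext π
    simp only [Finset.mem_filter, Finset.mem_univ, true_and, Finset.mem_singleton]
    constructor
    · intro hπ
      exact eq_one_of_adj π (fun i h1 hn =>
        lt_of_not_descSet hπ h1 hn (Finset.notMem_empty i))
    · rintro rfl
      rw [descSet_one]
  rw [he, Finset.card_singleton]

lemma fib_single (h1 : 1 ≤ t) (h2 : t < n) :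
    fib n t {t} (posSet n t) = {1} := by
  ext π
  rw [fib, Finset.mem_filter, Finset.mem_singleton]
  constructor
  · rintro ⟨-, hdesc, hphi⟩
    refine eq_one_of_adj π (fun i hi1 hn => ?_)
    by_cases hit : i = t
    · subst hit
      have ha : π ⟨i - 1, by omega⟩ ∈ posSet n i := hphi ▸ mem_phi_of_pos (by simp; omega)
      have hb : π ⟨i, hn⟩ ∉ posSet n i := hphi ▸ not_mem_phi_of_pos (by simp)
      simp only [posSet, Finset.mem_filter, Finset.mem_univ, true_and, not_lt] at ha hb
      rw [Fin.lt_iff_val_lt_val]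
      omega
    · exact lt_of_not_descSet hdesc hi1 hn (by simp [hit])
  · rintro rfl
    exact ⟨Finset.mem_univ _, by rw [descSet_one]; exact Finset.empty_subset _, phi_one⟩

lemma alpha_single (h1 : 1 ≤ t) (h2 : t < n) :
    descAlpha n ({t} : Finset ℕ) = n.choose t := by
  rw [alpha_eq_mul (Finset.mem_singleton_self t) (le_of_lt h2), fib_single h1 h2,
    Finset.card_singleton, mul_one]

lemma alpha_eq_sum_beta (S : Finset ℕ) :
    descAlpha n S = ∑ T ∈ S.powerset, descBeta n T := by
  rw [descAlpha]
  rw [Finset.card_eq_sum_card_fiberwise (f := descSet n) (t := S.powerset)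
    (fun π hπ => Finset.mem_powerset.mpr ((Finset.mem_filter.mp hπ).2))]
  refine Finset.sum_congr rfl (fun T hT => ?_)
  rw [descBeta]
  congr 1
  rw [Finset.filter_filter]
  refine Finset.filter_congr (fun π _ => ?_)
  constructor
  · exact fun h => h.2
  · intro h
    exact ⟨h ▸ Finset.mem_powerset.mp hT, h⟩

lemma sum_neg_one_pow_between (S R : Finset ℕ) (hR : R ⊆ S) :
    ∑ T ∈ S.powerset.filter (fun T => R ⊆ T), (-1 : ℤ) ^ ((S \ T).card)
      = if R = S then 1 else 0 := by
  classical
  have hbij : ∑ T ∈ S.powerset.filter (fun T => R ⊆ T), (-1 : ℤ) ^ ((S \ T).card)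
      = ∑ U ∈ (S \ R).powerset, (-1 : ℤ) ^ U.card := by
    refine Finset.sum_nbij' (fun T => S \ T) (fun U => S \ U) ?_ ?_ ?_ ?_ ?_
    · intro T hT
      rw [Finset.mem_filter, Finset.mem_powerset] at hT
      rw [Finset.mem_powerset]
      exact Finset.sdiff_subset_sdiff le_rfl hT.2
    · intro U hU
      rw [Finset.mem_powerset] at hU
      rw [Finset.mem_filter, Finset.mem_powerset]
      refine ⟨Finset.sdiff_subset, ?_⟩
      intro r hr
      rw [Finset.mem_sdiff]
      refine ⟨hR hr, fun hc => ?_⟩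
      exact (Finset.mem_sdiff.mp (hU hc)).2 hr
    · intro T hT
      rw [Finset.mem_filter, Finset.mem_powerset] at hT
      exact Finset.sdiff_sdiff_eq_self hT.1
    · intro U hU
      rw [Finset.mem_powerset] at hU
      exact Finset.sdiff_sdiff_eq_self (hU.trans Finset.sdiff_subset)
    · intro T _
      rfl
  rw [hbij, Finset.sum_powerset_neg_one_pow_card]
  by_cases hc : R = S
  · rw [if_pos hc, if_pos (by rw [hc, Finset.sdiff_self])]
  · rw [if_neg hc, if_neg (fun he => hc
      (Finset.Subset.antisymm hR (Finset.sdiff_eq_empty_iff_subset.mp he)))]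

lemma beta_eq_int (S : Finset ℕ) :
    (descBeta n S : ℤ)
      = ∑ T ∈ S.powerset, (-1 : ℤ) ^ ((S \ T).card) * (descAlpha n T : ℤ) := by
  classical
  have h1 : ∀ T ∈ S.powerset,
      (-1 : ℤ) ^ ((S \ T).card) * (descAlpha n T : ℤ)
        = ∑ R ∈ T.powerset, (-1 : ℤ) ^ ((S \ T).card) * (descBeta n R : ℤ) := by
    intro T _
    rw [alpha_eq_sum_beta T, ← Finset.mul_sum]
    push_cast
    ring
  rw [Finset.sum_congr rfl h1]
  rw [Finset.sum_comm' (s := S.powerset) (t := fun T => T.powerset)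
    (t' := S.powerset) (s' := fun R => S.powerset.filter (fun T => R ⊆ T))
    (f := fun T R => (-1 : ℤ) ^ ((S \ T).card) * (descBeta n R : ℤ))
    (by
      intro T R
      simp only [Finset.mem_powerset, Finset.mem_filter]
      constructor
      · rintro ⟨hTS, hRT⟩
        exact ⟨⟨hTS, hRT⟩, hRT.trans hTS⟩
      · rintro ⟨⟨hTS, hRT⟩, _⟩
        exact ⟨hTS, hRT⟩)]
  have h2 : ∀ R ∈ S.powerset,
      (∑ T ∈ S.powerset.filter (fun T => R ⊆ T),
        (-1 : ℤ) ^ ((S \ T).card) * (descBeta n R : ℤ))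
        = (if R = S then 1 else 0) * (descBeta n R : ℤ) := by
    intro R hR
    rw [← Finset.sum_mul, sum_neg_one_pow_between S R (Finset.mem_powerset.mp hR)]
  rw [Finset.sum_congr rfl h2]
  rw [Finset.sum_eq_single_of_mem S (Finset.mem_powerset_self S)
    (fun R _ hne => by rw [if_neg hne, zero_mul])]
  rw [if_pos rfl, one_mul]

lemma choose_mul_eq (j : ℕ) {t : ℕ} (ht : 0 < t) :
    2 ^ j * (2 ^ j - 1).choose (t - 1) = (2 ^ j).choose t * t := by
  have h := Nat.add_one_mul_choose_eq (2 ^ j - 1) (t - 1)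
  have h1 : 2 ^ j - 1 + 1 = 2 ^ j := by
    have := Nat.one_le_two_pow (n := j); omega
  have h2 : t - 1 + 1 = t := by omega
  rw [h1, h2] at h
  exact h

lemma pow_sub_dvd_choose {j t : ℕ} (ht : 0 < t) (htn : t < 2 ^ j) :
    2 ^ (j - t.factorization 2) ∣ (2 ^ j).choose t := by
  set w := t.factorization 2 with hw
  have hwj : w ≤ j := by
    have hdvd : 2 ^ w ∣ t := Nat.ordProj_dvd t 2
    have h1 : 2 ^ w ≤ t := Nat.le_of_dvd ht hdvd
    have := (Nat.pow_lt_pow_iff_right (a := 2) (by norm_num)).mp (lt_of_le_of_lt h1 htn)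
    omega
  have hm : 2 ^ w * (ordCompl[2] t) = t := Nat.ordProj_mul_ordCompl_eq_self t 2
  set m := ordCompl[2] t with hmdef
  have hodd : ¬ 2 ∣ m := Nat.not_dvd_ordCompl Nat.prime_two (by omega)
  have hdvd : 2 ^ j ∣ (2 ^ j).choose t * t := ⟨_, (choose_mul_eq j ht).symm⟩
  have hsplit : 2 ^ (j - w) * 2 ^ w ∣ ((2 ^ j).choose t * m) * 2 ^ w := by
    have hjw : j - w + w = j := by omega
    have he : (2 ^ j).choose t * m * 2 ^ w = (2 ^ j).choose t * t := by
      rw [← hm]; ring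
    rw [← pow_add, hjw, he]
    exact hdvd
  have h3 : 2 ^ (j - w) ∣ (2 ^ j).choose t * m :=
    (Nat.mul_dvd_mul_iff_right (Nat.pow_pos (by norm_num))).mp hsplit
  have hcop : Nat.Coprime (2 ^ (j - w)) m :=
    Nat.Coprime.pow_left _ (Nat.Prime.coprime_iff_not_dvd Nat.prime_two |>.mpr hodd)
  exact hcop.dvd_of_dvd_mul_right h3

lemma two_dvd_choose {j t : ℕ} (ht : 0 < t) (htn : t < 2 ^ j) :
    2 ∣ (2 ^ j).choose t := by
  have hwj : t.factorization 2 < j := by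
    have hdvd : 2 ^ (t.factorization 2) ∣ t := Nat.ordProj_dvd t 2
    have h1 : 2 ^ (t.factorization 2) ≤ t := Nat.le_of_dvd ht hdvd
    exact (Nat.pow_lt_pow_iff_right (a := 2) (by norm_num)).mp (lt_of_le_of_lt h1 htn)
  have := pow_sub_dvd_choose ht htn
  exact dvd_trans (dvd_pow_self 2 (by omega : j - t.factorization 2 ≠ 0)) this

lemma four_dvd_choose {j t : ℕ} (hj : 2 ≤ j) (ht : 0 < t) (htn : t < 2 ^ j)
    (hne : t ≠ 2 ^ (j - 1)) : 4 ∣ (2 ^ j).choose t := by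
  have hwj : t.factorization 2 ≤ j - 2 := by
    by_contra hcon
    have hge : j - 1 ≤ t.factorization 2 := by omega
    have hdvd : 2 ^ (j - 1) ∣ t :=
      dvd_trans (pow_dvd_pow 2 hge) (Nat.ordProj_dvd t 2)
    obtain ⟨c, hc⟩ := hdvd
    have h2 : 2 ^ (j - 1) * 2 = 2 ^ j := by
      rw [← pow_succ]
      congr 1
      omega
    have hpos : 0 < 2 ^ (j - 1) := Nat.pow_pos (by norm_num)
    have hc1 : c = 1 := by nlinarith [hc ▸ ht, hc ▸ htn]
    exact hne (by rw [hc, hc1, mul_one])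
  have := pow_sub_dvd_choose ht htn
  have h4 : (2 : ℕ) ^ 2 ∣ 2 ^ (j - t.factorization 2) := pow_dvd_pow 2 (by omega)
  exact dvd_trans (by norm_num : (4 : ℕ) ∣ 2 ^ 2) (dvd_trans h4 this)

lemma odd_choose_sub_one {j : ℕ} (hj : 1 ≤ j) :
    ∀ k, k ≤ 2 ^ j - 1 → ¬ 2 ∣ (2 ^ j - 1).choose k := by
  intro k
  induction k with
  | zero => intro _; simp
  | succ k ih =>
    intro hk
    have hpas : (2 ^ j - 1).choose k + (2 ^ j - 1).choose (k + 1)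
        = (2 ^ j).choose (k + 1) := by
      have h1 : 2 ^ j - 1 + 1 = 2 ^ j := by
        have := Nat.one_le_two_pow (n := j); omega
      calc (2 ^ j - 1).choose k + (2 ^ j - 1).choose (k + 1)
          = (2 ^ j - 1 + 1).choose (k + 1) := (Nat.choose_succ_succ _ _).symm
        _ = (2 ^ j).choose (k + 1) := by rw [h1]
    have heven : 2 ∣ (2 ^ j).choose (k + 1) :=
      two_dvd_choose (by omega) (by have := Nat.one_le_two_pow (n := j); omega)
    have hoddk : ¬ 2 ∣ (2 ^ j - 1).choose k := ih (by omega)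
    omega

lemma choose_half_mod {j : ℕ} (hj : 2 ≤ j) : (2 ^ j).choose (2 ^ (j - 1)) % 4 = 2 := by
  have hpos : 0 < 2 ^ (j - 1) := Nat.pow_pos (by norm_num)
  have hkey := choose_mul_eq j hpos
  have h2 : 2 ^ j = 2 ^ (j - 1) * 2 := by
    rw [← pow_succ]; congr 1; omega
  have heq : (2 ^ j).choose (2 ^ (j - 1))
      = 2 * (2 ^ j - 1).choose (2 ^ (j - 1) - 1) := by
    have h3 : 2 ^ (j - 1) * (2 * (2 ^ j - 1).choose (2 ^ (j - 1) - 1))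
        = 2 ^ (j - 1) * (2 ^ j).choose (2 ^ (j - 1)) := by
      calc 2 ^ (j - 1) * (2 * (2 ^ j - 1).choose (2 ^ (j - 1) - 1))
          = 2 ^ j * (2 ^ j - 1).choose (2 ^ (j - 1) - 1) := by rw [h2]; ring
        _ = (2 ^ j).choose (2 ^ (j - 1)) * 2 ^ (j - 1) := hkey
        _ = 2 ^ (j - 1) * (2 ^ j).choose (2 ^ (j - 1)) := by ring
    exact (Nat.eq_of_mul_eq_mul_left hpos h3).symm
  have hodd : ¬ 2 ∣ (2 ^ j - 1).choose (2 ^ (j - 1) - 1) := by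
    refine odd_choose_sub_one (by omega) _ ?_
    have h4 : 2 ^ (j - 1) ≤ 2 ^ j := Nat.pow_le_pow_right (by norm_num) (by omega)
    omega
  omega

lemma mod_four_of_cast {x r : ℕ} (hr : r < 4) (h : (x : ZMod 4) = (r : ℕ)) : x % 4 = r := by
  have := congrArg ZMod.val h
  rwa [ZMod.val_natCast, ZMod.val_natCast, Nat.mod_eq_of_lt hr] at this

lemma beta_mod_four {n j : ℕ} (h : n = 2 ^ j) (h4 : 4 ≤ n) {S : Finset ℕ}
    (hS : S ⊆ Finset.Icc 1 (n - 1)) :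
    descBeta n S % 4 = if Even ((S \ {n / 2}).card) then 1 else 3 := by
  classical
  have hj : 2 ≤ j := by
    by_contra hc
    interval_cases j <;> omega
  have hm : n / 2 = 2 ^ (j - 1) := by
    subst h
    rw [show (2 : ℕ) ^ j = 2 * 2 ^ (j - 1) by rw [← pow_succ']; congr 1; omega,
      Nat.mul_div_cancel_left _ two_pos]
  set m := n / 2 with hmdef
  have hm2 : 2 ≤ m := by
    rw [hm]
    calc (2:ℕ) = 2 ^ 1 := by norm_num
    _ ≤ 2 ^ (j - 1) := Nat.pow_le_pow_right (by norm_num) (by omega)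
  have hmn : m < n := by omega
  have hmlt : m ≤ n - 1 := by omega
  -- cast identity to ZMod 4
  have hz : (descBeta n S : ZMod 4)
      = ∑ T ∈ S.powerset, (-1 : ZMod 4) ^ ((S \ T).card) * (descAlpha n T : ZMod 4) := by
    have := congrArg (fun z : ℤ => (z : ZMod 4)) (beta_eq_int (n := n) S)
    push_cast at this
    exact this
  -- vanishing terms
  have hvan : ∀ T ∈ S.powerset, T ≠ ∅ → T ≠ {m} → (descAlpha n T : ZMod 4) = 0 := by
    intro T hT hT0 hTm
    obtain ⟨t, htT, htm⟩ : ∃ t ∈ T, t ≠ m := by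
      by_contra hc
      push_neg at hc
      rcases Finset.subset_singleton_iff.mp (fun x hx => Finset.mem_singleton.mpr (hc x hx))
        with h0 | h1
      · exact hT0 h0
      · exact hTm h1
    have htIcc : t ∈ Finset.Icc 1 (n - 1) := hS (Finset.mem_powerset.mp hT htT)
    rw [Finset.mem_Icc] at htIcc
    have hdvd4 : 4 ∣ n.choose t := by
      rw [h]
      exact four_dvd_choose hj (by omega) (by omega) (by rw [← hm]; exact htm)
    have hdvd : 4 ∣ descAlpha n T :=
      dvd_trans hdvd4 (choose_dvd_alpha htT (by omega))
    exact (ZMod.natCast_eq_zero_iff _ 4).mpr hdvd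
  have hamC : (descAlpha n ({m} : Finset ℕ) : ZMod 4) = 2 := by
    rw [alpha_single (by omega) hmn]
    have hcm : n.choose m % 4 = 2 := by
      rw [h, hm]
      exact choose_half_mod hj
    calc ((n.choose m : ℕ) : ZMod 4) = ((n.choose m % 4 : ℕ) : ZMod 4) :=
      (ZMod.natCast_mod _ 4).symm
    _ = ((2 : ℕ) : ZMod 4) := by rw [hcm]
    _ = 2 := by norm_num
  set c := (S \ {m}).card with hc
  by_cases hmS : m ∈ S
  · have hP : ({∅, {m}} : Finset (Finset ℕ)) ⊆ S.powerset := by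
      intro T hT
      rcases Finset.mem_insert.mp hT with rfl | hT
      · exact Finset.empty_mem_powerset S
      · rw [Finset.mem_singleton.mp hT]
        exact Finset.mem_powerset.mpr (Finset.singleton_subset_iff.mpr hmS)
    have hzz : (descBeta n S : ZMod 4)
        = ∑ T ∈ ({∅, {m}} : Finset (Finset ℕ)),
            (-1 : ZMod 4) ^ ((S \ T).card) * (descAlpha n T : ZMod 4) := by
      rw [hz]
      refine (Finset.sum_subset hP ?_).symm
      intro T hT hT2
      have hT0 : T ≠ ∅ := by
        intro hcon; apply hT2; rw [hcon]; exact Finset.mem_insert_self _ _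
      have hTm : T ≠ {m} := by
        intro hcon; apply hT2; rw [hcon]
        exact Finset.mem_insert_of_mem (Finset.mem_singleton_self _)
      rw [hvan T hT hT0 hTm, mul_zero]
    rw [Finset.sum_pair (Ne.symm (Finset.singleton_ne_empty m))] at hzz
    rw [Finset.sdiff_empty, alpha_empty, hamC] at hzz
    have hcard : S.card = c + 1 := by
      rw [hc, Finset.card_sdiff_of_subset (Finset.singleton_subset_iff.mpr hmS),
        Finset.card_singleton]
      have : 1 ≤ S.card := Finset.card_pos.mpr ⟨m, hmS⟩
      omega
    rw [hcard] at hzz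
    push_cast at hzz
    rw [← hc] at hzz
    rcases Nat.even_or_odd c with hce | hco
    · rw [if_pos hce]
      refine mod_four_of_cast (by norm_num) ?_
      rw [hzz, pow_succ, hce.neg_one_pow]
      decide
    · rw [if_neg (Nat.not_even_iff_odd.mpr hco)]
      refine mod_four_of_cast (by norm_num) ?_
      rw [hzz, pow_succ, hco.neg_one_pow]
      decide
  · have hSd : S \ {m} = S := Finset.sdiff_eq_self_of_disjoint
      (Finset.disjoint_singleton_right.mpr hmS)
    have hP : ({∅} : Finset (Finset ℕ)) ⊆ S.powerset := by
      intro T hT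
      rw [Finset.mem_singleton.mp hT]
      exact Finset.empty_mem_powerset S
    have hzz : (descBeta n S : ZMod 4)
        = ∑ T ∈ ({∅} : Finset (Finset ℕ)),
            (-1 : ZMod 4) ^ ((S \ T).card) * (descAlpha n T : ZMod 4) := by
      rw [hz]
      refine (Finset.sum_subset hP ?_).symm
      intro T hT hT2
      have hT0 : T ≠ ∅ := by
        intro hcon; apply hT2; rw [hcon]; exact Finset.mem_singleton_self _
      have hTm : T ≠ {m} := by
        intro hcon
        apply hmS
        have := Finset.mem_powerset.mp hT
        rw [hcon] at this
        exact this (Finset.mem_singleton_self m)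
      rw [hvan T hT hT0 hTm, mul_zero]
    rw [Finset.sum_singleton, Finset.sdiff_empty, alpha_empty] at hzz
    have hcc : S.card = c := by rw [hc, hSd]
    rw [hcc] at hzz
    push_cast at hzz
    rcases Nat.even_or_odd c with hce | hco
    · rw [if_pos hce]
      refine mod_four_of_cast (by norm_num) ?_
      rw [hzz, hce.neg_one_pow]
      decide
    · rw [if_neg (Nat.not_even_iff_odd.mpr hco)]
      refine mod_four_of_cast (by norm_num) ?_
      rw [hzz, hco.neg_one_pow]
      decide

lemma toggle_sub {E S : Finset ℕ} (hone : 1 ∈ E) (hS : S ⊆ E) :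
    (if 1 ∈ S then S.erase 1 else insert 1 S) ⊆ E := by
  by_cases h1 : 1 ∈ S
  · rw [if_pos h1]
    exact (Finset.erase_subset 1 S).trans hS
  · rw [if_neg h1]
    exact Finset.insert_subset hone hS

lemma toggle_toggle {S : Finset ℕ} :
    (let f := fun S : Finset ℕ => if 1 ∈ S then S.erase 1 else insert 1 S; f (f S)) = S := by
  by_cases h1 : 1 ∈ S
  · simp only [if_pos h1]
    rw [if_neg (Finset.notMem_erase 1 S), Finset.insert_erase h1]
  · simp only [if_neg h1]
    rw [if_pos (Finset.mem_insert_self 1 S), Finset.erase_insert h1]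

lemma toggle_parity {m : ℕ} (h1m : (1 : ℕ) ≠ m) (S : Finset ℕ) :
    Even (((if 1 ∈ S then S.erase 1 else insert 1 S) \ {m}).card)
      ↔ ¬ Even ((S \ {m}).card) := by
  classical
  by_cases h1 : 1 ∈ S
  · rw [if_pos h1]
    have he : S.erase 1 \ {m} = (S \ {m}).erase 1 := by
      ext x
      simp only [Finset.mem_erase, Finset.mem_sdiff, Finset.mem_singleton]
      tauto
    have h1sd : 1 ∈ S \ {m} := Finset.mem_sdiff.mpr ⟨h1, by simp [h1m]⟩
    have hc1 : 1 ≤ (S \ {m}).card := Finset.card_pos.mpr ⟨1, h1sd⟩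
    rw [he, Finset.card_erase_of_mem h1sd]
    rw [Nat.even_sub hc1]
    simp only [Nat.even_iff]
    omega
  · rw [if_neg h1]
    have he : insert 1 S \ {m} = insert 1 (S \ {m}) := by
      ext x
      simp only [Finset.mem_insert, Finset.mem_sdiff, Finset.mem_singleton]
      constructor
      · rintro ⟨h | h, hm⟩
        · exact Or.inl h
        · exact Or.inr ⟨h, hm⟩
      · rintro (rfl | ⟨hx, hm⟩)
        · exact ⟨Or.inl rfl, fun hc => h1m hc⟩
        · exact ⟨Or.inr hx, hm⟩
    have h1sd : 1 ∉ S \ {m} := fun hc => h1 (Finset.mem_sdiff.mp hc).1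
    rw [he, Finset.card_insert_of_notMem h1sd]
    simp only [Nat.even_iff]
    omega

end Stmt10

theorem stmt_10 (n j : ℕ) (h : n = 2 ^ j) (h4 : 4 ≤ n) :
    (∀ S ⊆ Finset.Icc 1 (n - 1),
        descBeta n S % 4 = if Even ((S \ {n / 2}).card) then 1 else 3) ∧
    ((Finset.Icc 1 (n - 1)).powerset.filter (fun S => descBeta n S % 4 = 1)).card
        = 2 ^ (n - 2) ∧
    ((Finset.Icc 1 (n - 1)).powerset.filter (fun S => descBeta n S % 4 = 3)).card
        = 2 ^ (n - 2) := by
  classical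
  set E := Finset.Icc 1 (n - 1) with hE
  set m := n / 2 with hmdef
  have hm2 : 2 ≤ m := by omega
  have h1m : (1 : ℕ) ≠ m := by omega
  have hone : (1 : ℕ) ∈ E := by rw [hE, Finset.mem_Icc]; omega
  have hbeta : ∀ S ⊆ E, descBeta n S % 4 = if Even ((S \ {m}).card) then 1 else 3 :=
    fun S hS => Stmt10.beta_mod_four h h4 hS
  refine ⟨hbeta, ?_, ?_⟩
  all_goals {
    have hf1 : E.powerset.filter (fun S => descBeta n S % 4 = 1)
        = E.powerset.filter (fun S => Even ((S \ {m}).card)) := by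
      refine Finset.filter_congr (fun S hS => ?_)
      rw [hbeta S (Finset.mem_powerset.mp hS)]
      by_cases he : Even ((S \ {m}).card) <;> simp [he]
    have hf3 : E.powerset.filter (fun S => descBeta n S % 4 = 3)
        = E.powerset.filter (fun S => ¬ Even ((S \ {m}).card)) := by
      refine Finset.filter_congr (fun S hS => ?_)
      rw [hbeta S (Finset.mem_powerset.mp hS)]
      by_cases he : Even ((S \ {m}).card) <;> simp [he]
    have hcards : (E.powerset.filter (fun S => Even ((S \ {m}).card))).card
        = (E.powerset.filter (fun S => ¬ Even ((S \ {m}).card))).card := by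
      refine Finset.card_bij' (fun S _ => if 1 ∈ S then S.erase 1 else insert 1 S)
        (fun S _ => if 1 ∈ S then S.erase 1 else insert 1 S) ?_ ?_ ?_ ?_
      · intro S hS
        rw [Finset.mem_filter, Finset.mem_powerset] at hS ⊢
        exact ⟨Stmt10.toggle_sub hone hS.1,
          fun hc => (Stmt10.toggle_parity h1m S).mp hc hS.2⟩
      · intro S hS
        rw [Finset.mem_filter, Finset.mem_powerset] at hS ⊢
        exact ⟨Stmt10.toggle_sub hone hS.1,
          (Stmt10.toggle_parity h1m S).mpr hS.2⟩
      · intro S _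
        exact Stmt10.toggle_toggle
      · intro S _
        exact Stmt10.toggle_toggle
    have hsum : (E.powerset.filter (fun S => Even ((S \ {m}).card))).card
        + (E.powerset.filter (fun S => ¬ Even ((S \ {m}).card))).card
        = 2 ^ (n - 1) := by
      rw [Finset.card_filter_add_card_filter_not, Finset.card_powerset, hE,
        Nat.card_Icc]
      have hnn : n - 1 + 1 - 1 = n - 1 := by omega
      rw [hnn]
    have hpow : (2 : ℕ) ^ (n - 1) = 2 * 2 ^ (n - 2) := by
      rw [show n - 1 = (n - 2) + 1 by omega, pow_succ]
      ring
    first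
    | (rw [hf1]; omega)
    | (rw [hf3]; omega)
  }
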